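/- arXiv:1104.4645 — 7 statements merged into one kernel-verified Lean document; each statement's English description precedes it below -/
import Mathlib

section
/- Let a < 0 be a real number and let P ∈ E_a(ℝ) be a point of infinite order. Then λ_∞(P) > (1/4)·log(x(P)² − a) − (1/12)·log|Δ(E_a)|. -/
open Filter Real

/-- The elliptic curve `y² = x³ + a·x` over a field. -/
def Ecurve {F : Type*} [Field F] (a : F) : WeierstrassCurve.Affine F :=
  { a₁ := 0, a₂ := 0, a₃ := 0, a₄ := a, a₆ := 0 }

/-- The x-coordinate of a point (with junk value `0` at the identity `O`). -/
def xc {F : Type*} [Field F] {W : WeierstrassCurve.Affine F} : W.Point → F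
  | .zero => 0
  | @WeierstrassCurve.Affine.Point.some _ _ _ x _ _ => x

/-- For `E_a : y² = x³ + ax`, the quantity `z(Q) = (1 − a/x(Q)²)²` from Tate's series. -/
noncomputable def zE (a : ℝ) (x : ℝ) : ℝ := (1 - a / x ^ 2) ^ 2

/-- The archimedean local height
`λ_∞(P) = (1/2)log|x(P)| + (1/8)·S − (1/12)·log|Δ(E_a)|` of a point of infinite order,
where `S` is the (hypothesized) sum of Tate's series `∑_{k≥0} 4^{−k}·log z(2^kP)`
and `Δ(E_a) = −64a³`. -/
noncomputable def lamInf (a : ℝ) {W : WeierstrassCurve.Affine ℝ} (P : W.Point) (S : ℝ) : ℝ :=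
  (1 / 2) * Real.log |xc P| + (1 / 8) * S - (1 / 12) * Real.log |(-64) * a ^ 3|

/-- Lemma 3.1(a): for `a < 0` and a point `P ∈ E_a(ℝ)` of infinite order,
`λ_∞(P) > (1/4)·log(x(P)² − a) − (1/12)·log|Δ(E_a)|`. -/
theorem arch_a_neg_part_a (a : ℝ) (ha : a < 0)
    (P : (Ecurve a).Point)
    (hP : ∀ n : ℕ, 0 < n → n • P ≠ 0)
    (hx : ∀ k : ℕ, xc ((2 ^ k) • P) ≠ 0)
    (S : ℝ)
    (hS : HasSum (fun k : ℕ => (1 / 4 : ℝ) ^ k * Real.log (zE a (xc ((2 ^ k) • P)))) S) :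
    lamInf a P S
      > (1 / 4) * Real.log ((xc P) ^ 2 - a) - (1 / 12) * Real.log |(-64) * a ^ 3| := by
  have hx0 : xc P ≠ 0 := by simpa using hx 0
  set f : ℕ → ℝ := fun k => (1 / 4 : ℝ) ^ k * Real.log (zE a (xc ((2 ^ k) • P))) with hf
  have hpos : ∀ k, 0 < f k := by
    intro k
    have hxk := hx k
    have hdiv : a / (xc ((2 ^ k) • P)) ^ 2 < 0 :=
      div_neg_of_neg_of_pos ha (by positivity)
    have ht : (1 : ℝ) < 1 - a / (xc ((2 ^ k) • P)) ^ 2 := by linarith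
    have hz : (1 : ℝ) < zE a (xc ((2 ^ k) • P)) := by
      have := one_lt_pow₀ ht (n := 2) (by norm_num)
      simpa [zE] using this
    have hlog : 0 < Real.log (zE a (xc ((2 ^ k) • P))) := Real.log_pos hz
    have : (0 : ℝ) < (1 / 4 : ℝ) ^ k := by positivity
    simp only [hf]
    positivity
  have htail : HasSum (fun k => f (k + 1)) (S - f 0) := by
    refine (hasSum_nat_add_iff 1).mpr ?_
    simpa using hS
  have h0 : 0 < S - f 0 := by
    have := Summable.tsum_pos htail.summable (fun k => (hpos (k + 1)).le) 0 (hpos 1)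
    rwa [htail.tsum_eq] at this
  -- key equality
  set x := xc P with hxx
  have hx2 : (0 : ℝ) < x ^ 2 := by positivity
  have ht0 : (0 : ℝ) < 1 - a / x ^ 2 := by
    have : a / x ^ 2 < 0 := div_neg_of_neg_of_pos ha hx2
    linarith
  have hsplit : x ^ 2 - a = x ^ 2 * (1 - a / x ^ 2) := by
    field_simp
  have hlogeq : Real.log (x ^ 2 - a)
      = 2 * Real.log |x| + Real.log (1 - a / x ^ 2) := by
    rw [hsplit, Real.log_mul (by positivity) (ne_of_gt ht0)]
    rw [show x ^ 2 = |x| ^ 2 by rw [sq_abs], Real.log_pow]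
    push_cast; ring
  have hf0 : f 0 = 2 * Real.log (1 - a / x ^ 2) := by
    simp only [hf]
    have : zE a x = (1 - a / x ^ 2) ^ 2 := rfl
    have h2P : xc ((2 ^ 0) • P) = x := by simp [hxx]
    rw [pow_zero, one_mul, h2P, this, Real.log_pow]
    push_cast; ring
  have hSgt : S > f 0 := by linarith
  simp only [lamInf, gt_iff_lt]
  have hkey : (1 / 4 : ℝ) * Real.log (x ^ 2 - a)
      = (1 / 2) * Real.log |x| + (1 / 8) * f 0 := by
    rw [hlogeq, hf0]; ring
  rw [hkey]
  linarith
end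

section
/- Let a ≤ −2 be a real number and let P ∈ E_a(ℝ) be a point of infinite order not lying in the identity component E_a⁰(ℝ) (so −√(−a) < x(P) < 0). Then −(1/4)·log|a| − 0.16 < ( (1/2)·log max{1, |x(P)|} − (1/12)·log|Δ(E_a)| ) − λ_∞(P). -/
open Filter Real

/-- Doubling a point on `E_a` lands in the identity component: `x(2Q) ≥ √(−a)`. -/
theorem double_x_ge (a : ℝ) (ha : a ≤ -2) (Q : (Ecurve a).Point) (hQ2 : Q + Q ≠ 0) :
    Real.sqrt (-a) ≤ xc (Q + Q) := by
  cases Q with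
  | zero => exact absurd rfl hQ2
  | some _ _ h =>
    rename_i x y
    by_cases hy : y = (Ecurve a).negY x y
    · exact absurd (WeierstrassCurve.Affine.Point.add_self_of_Y_eq hy) hQ2
    · rw [WeierstrassCurve.Affine.Point.add_self_of_Y_ne hy]
      have hy0 : y ≠ 0 := by
        simp [Ecurve, WeierstrassCurve.Affine.negY] at hy
        intro h0; exact hy (by rw [h0]; ring)
      have heq : y ^ 2 = x ^ 3 + a * x := by
        have := h.1
        rw [WeierstrassCurve.Affine.equation_iff] at this
        simpa [Ecurve] using this
      have hxc : xc (WeierstrassCurve.Affine.Point.some _ _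
          (WeierstrassCurve.Affine.nonsingular_add h h fun hxy => hy hxy.right)) =
          ((3 * x ^ 2 + a) / (2 * y)) ^ 2 - 2 * x := by
        simp only [xc]
        rw [WeierstrassCurve.Affine.slope_of_Y_ne rfl hy]
        simp [Ecurve, WeierstrassCurve.Affine.addX, WeierstrassCurve.Affine.negY]
        ring
      rw [hxc]
      set s := Real.sqrt (-a) with hs
      have hs0 : 0 ≤ s := Real.sqrt_nonneg _
      have hs2 : s ^ 2 = -a := Real.sq_sqrt (by linarith)
      set L := (3 * x ^ 2 + a) / (2 * y) with hL
      have h2 : L ^ 2 * (4 * y ^ 2) = (3 * x ^ 2 + a) ^ 2 := by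
        have hc : L * (2 * y) = 3 * x ^ 2 + a := div_mul_cancel₀ _ (by simpa using hy0)
        calc L ^ 2 * (4 * y ^ 2) = (L * (2 * y)) ^ 2 := by ring
          _ = _ := by rw [hc]
      have h3 : (L ^ 2 - 2 * x - s) * (4 * y ^ 2) = (x ^ 2 - 2 * s * x + a) ^ 2 := by
        linear_combination h2 - 4 * (2 * x + s) * heq - 4 * x ^ 2 * hs2
      have hy2 : 0 < y ^ 2 := by positivity
      nlinarith [h3, sq_nonneg (x ^ 2 - 2 * s * x + a), hy2]

set_option maxHeartbeats 1000000 in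
/-- Lemma 3.1(d): for `a ≤ −2` and a point `P ∈ E_a(ℝ)` of infinite order outside the
identity component (so `−√(−a) < x(P) < 0`),
`−(1/4)·log|a| − 0.16 < ((1/2)·log max{1,|x(P)|} − (1/12)·log|Δ(E_a)|) − λ_∞(P)`. -/
theorem arch_a_neg_part_d (a : ℝ) (ha : a ≤ -2)
    (P : (Ecurve a).Point)
    (hP : ∀ n : ℕ, 0 < n → n • P ≠ 0)
    (hx : ∀ k : ℕ, xc ((2 ^ k) • P) ≠ 0)
    (hP1 : -Real.sqrt (-a) < xc P) (hP2 : xc P < 0)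
    (S : ℝ)
    (hS : HasSum (fun k : ℕ => (1 / 4 : ℝ) ^ k * Real.log (zE a (xc ((2 ^ k) • P)))) S) :
    -(1 / 4) * Real.log |a| - 0.16
        < ((1 / 2) * Real.log (max 1 |xc P|) - (1 / 12) * Real.log |(-64) * a ^ 3|)
            - lamInf a P S := by
  have ha0 : a < 0 := by linarith
  have hA : (2:ℝ) ≤ -a := by linarith
  -- doubling: all points 2^(k+1) P lie in the identity component
  have hdb : ∀ k : ℕ, Real.sqrt (-a) ≤ xc ((2 ^ (k+1)) • P) := by
    intro k
    have h2 : (2 ^ (k+1)) • P = (2 ^ k) • P + (2 ^ k) • P := by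
      rw [pow_succ', mul_smul, two_smul]
    rw [h2]
    exact double_x_ge a ha _ (h2 ▸ hP (2 ^ (k+1)) (by positivity))
  -- bound on the terms of the tail of the series
  have hzb : ∀ k : ℕ, Real.log (zE a (xc ((2 ^ (k+1)) • P))) ≤ 2 * Real.log 2 := by
    intro k
    set t := xc ((2 ^ (k+1)) • P) with htdef
    have h1 : Real.sqrt (-a) ≤ t := hdb k
    have hsp : 0 < Real.sqrt (-a) := Real.sqrt_pos.mpr (by linarith)
    have ht0 : 0 < t := lt_of_lt_of_le hsp h1
    have ht2 : -a ≤ t ^ 2 := by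
      calc -a = Real.sqrt (-a) ^ 2 := (Real.sq_sqrt (by linarith)).symm
        _ ≤ t ^ 2 := pow_le_pow_left₀ (Real.sqrt_nonneg _) h1 2
    have hd : -(a / t ^ 2) ≤ 1 := by
      rw [← neg_div]; exact (div_le_one (by positivity)).mpr ht2
    have hd0 : a / t ^ 2 ≤ 0 := div_nonpos_of_nonpos_of_nonneg (le_of_lt ha0) (by positivity)
    have hz4 : zE a t ≤ 4 := by
      have h5 : 1 - a / t ^ 2 ≤ 2 := by linarith
      have h6 : (0:ℝ) ≤ 1 - a / t ^ 2 := by linarith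
      calc zE a t = (1 - a / t ^ 2) ^ 2 := rfl
        _ ≤ 2 ^ 2 := pow_le_pow_left₀ h6 h5 2
        _ = 4 := by norm_num
    have hz1 : (1:ℝ) ≤ zE a t := by
      have : (1:ℝ) ≤ 1 - a / t ^ 2 := by linarith
      calc (1:ℝ) = 1 ^ 2 := by norm_num
        _ ≤ (1 - a / t ^ 2) ^ 2 := pow_le_pow_left₀ (by norm_num) this 2
    calc Real.log (zE a t) ≤ Real.log 4 := Real.log_le_log (by linarith) hz4
      _ = 2 * Real.log 2 := by
          rw [show (4:ℝ) = 2 ^ 2 by norm_num, Real.log_pow]; norm_num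
  -- bound the sum S
  set f := fun k : ℕ => (1 / 4 : ℝ) ^ k * Real.log (zE a (xc ((2 ^ k) • P))) with hfdef
  have hg : HasSum (fun k : ℕ => (1/4:ℝ)^k * (2 * Real.log 2)
      + (if k = 0 then f 0 - 2 * Real.log 2 else 0))
      ((1 - 1/4:ℝ)⁻¹ * (2 * Real.log 2) + (f 0 - 2 * Real.log 2)) := by
    exact ((hasSum_geometric_of_lt_one (by norm_num : (0:ℝ) ≤ 1/4)
      (by norm_num)).mul_right (2 * Real.log 2)).add (hasSum_ite_eq 0 _)
  have hSle : S ≤ f 0 + (2/3) * Real.log 2 := by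
    have h1 : S ≤ (1 - 1/4:ℝ)⁻¹ * (2 * Real.log 2) + (f 0 - 2 * Real.log 2) := by
      refine hasSum_le (fun k => ?_) hS hg
      cases k with
      | zero => simp [f]
      | succ n =>
          simp only [Nat.succ_ne_zero, if_false, add_zero]
          exact mul_le_mul_of_nonneg_left (hzb n) (by positivity)
    have h2 : ((1 - 1/4:ℝ)⁻¹ * (2 * Real.log 2) + (f 0 - 2 * Real.log 2))
        = f 0 + (2/3) * Real.log 2 := by norm_num; ring
    linarith [h2 ▸ h1]
  have hf0 : f 0 = Real.log (zE a (xc P)) := by simp [f]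
  -- facts about x₀
  set x0 := xc P with hx0def
  have hx0 : x0 ≠ 0 := by have := hx 0; simpa using this
  have hu0 : 0 < -x0 := by linarith
  have hx2 : 0 < x0 ^ 2 := by positivity
  have hx2a : 0 < x0 ^ 2 - a := by nlinarith
  -- log of z₀
  have hz0 : Real.log (zE a x0) = 2 * (Real.log (x0 ^ 2 - a) - Real.log (x0 ^ 2)) := by
    have h1 : (1 - a / x0 ^ 2) = (x0 ^ 2 - a) / x0 ^ 2 := by field_simp
    rw [zE, h1, Real.log_pow, Real.log_div (ne_of_gt hx2a) (ne_of_gt hx2)]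
    push_cast; ring
  have hlogx2 : Real.log (x0 ^ 2) = 2 * Real.log (-x0) := by
    rw [show x0 ^ 2 = (-x0) ^ 2 by ring, Real.log_pow]; push_cast; ring
  have habs : Real.log |x0| = Real.log (-x0) := by rw [abs_of_neg hP2]
  -- key comparison
  set m := max 1 (-x0) with hmdef
  have hm1 : (1:ℝ) ≤ m := le_max_left _ _
  have hmu : -x0 ≤ m := le_max_right _ _
  have hm0 : (0:ℝ) < m := by linarith
  have hmabs : max 1 |x0| = m := by rw [abs_of_neg hP2]
  have hkey : x0 ^ 2 - a ≤ (3/2) * (m ^ 2 * (-a)) := by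
    have hm2 : (1:ℝ) ≤ m ^ 2 := by nlinarith
    rcases le_total (-x0) 1 with h | h
    · have h1 : x0 ^ 2 ≤ 1 := by nlinarith
      nlinarith
    · have h1 : x0 ^ 2 ≤ m ^ 2 := by nlinarith
      nlinarith
  have hlogkey : Real.log (x0 ^ 2 - a) ≤ Real.log (3/2) + (2 * Real.log m + Real.log (-a)) := by
    calc Real.log (x0 ^ 2 - a) ≤ Real.log ((3/2) * (m ^ 2 * (-a))) :=
          Real.log_le_log hx2a hkey
      _ = Real.log (3/2) + (Real.log (m ^ 2) + Real.log (-a)) := by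
          rw [Real.log_mul (by norm_num) (by positivity), Real.log_mul (by positivity) (by positivity)]
      _ = Real.log (3/2) + (2 * Real.log m + Real.log (-a)) := by
          rw [Real.log_pow]; push_cast; ring
  -- numeric inequality
  have hnum : 3 * Real.log (3/2) + Real.log 2 < 1.92 := by
    have h1 : 3 * Real.log (3/2:ℝ) + Real.log 2 = Real.log (27/4) := by
      rw [show (27/4:ℝ) = (3/2) ^ 3 * 2 by norm_num,
        Real.log_mul (by norm_num) (by norm_num), Real.log_pow]
      push_cast; ring
    rw [h1]
    have e1 : (2.7182818283:ℝ) < Real.exp 1 := Real.exp_one_gt_d9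
    have e2 : (0.92:ℝ) ≤ Real.exp (-0.08) := by linarith [Real.add_one_le_exp (-0.08:ℝ)]
    have e3 : Real.exp (-0.08) * (Real.exp 1 * Real.exp 1) = Real.exp 1.92 := by
      rw [← Real.exp_add, ← Real.exp_add]; norm_num
    have h2 : (27/4:ℝ) < Real.exp 1.92 := by
      nlinarith [Real.exp_pos (-0.08:ℝ)]
    linarith [(Real.log_lt_iff_lt_exp (by norm_num : (0:ℝ) < 27/4)).mpr h2]
  -- assemble
  have haabs : |a| = -a := abs_of_neg ha0
  have expand : ((1 / 2) * Real.log (max 1 |x0|) - (1 / 12) * Real.log |(-64) * a ^ 3|)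
      - lamInf a P S
      = (1/2) * Real.log m - (1/2) * Real.log (-x0) - (1/8) * S := by
    unfold lamInf
    rw [hmabs, ← hx0def, habs]
    ring
  rw [expand, haabs]
  have hf0' : f 0 = 2 * Real.log (x0 ^ 2 - a) - 4 * Real.log (-x0) := by
    rw [hf0, hz0, hlogx2]; ring
  linarith [hSle, hlogkey, hnum, hf0'.ge, hf0'.le]
end

section
/- Let a > 0 and c > 1 be real numbers, put x' = c·√a and z = 1 − 8a·x'^{−2} + 16·a^{3/2}·x'^{−3} − 8a²·x'^{−4}. Then (1/8)·log( x'⁴·z / ((c−1)·√a)⁴ ) > 1/(2c) − 3/(4c²). (Equivalently: for every real c > 1, (1/8)·log( (c⁴ − 8c² + 16c − 8)/(c−1)⁴ ) > 1/(2c) − 3/(4c²).) -/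
open Real Set

lemma pade_log {x : ℝ} (hx : 1 < x) : 2*(x-1)/(x+1) < Real.log x := by
  set f : ℝ → ℝ := fun y => Real.log y - 2*(y-1)/(y+1) with hf
  have hcont : ContinuousOn f (Set.Ici 1) := by
    apply ContinuousOn.sub
    · exact Real.continuousOn_log.mono (fun y hy => by
        simp only [mem_compl_iff, mem_singleton_iff]
        have : (1:ℝ) ≤ y := hy
        intro h; simp [h] at this; linarith)
    · exact ContinuousOn.div (by fun_prop) (by fun_prop)
        (fun y hy => by have : (1:ℝ) ≤ y := hy; intro h; linarith [h])
  have hderiv : ∀ y ∈ interior (Set.Ici (1:ℝ)), 0 < deriv f y := by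
    intro y hy
    rw [interior_Ici] at hy
    have hy1 : 1 < y := hy
    have hy0 : 0 < y := by linarith
    have hyp1 : y + 1 ≠ 0 := by linarith
    have h1 : HasDerivAt Real.log y⁻¹ y := Real.hasDerivAt_log hy0.ne'
    have hnum : HasDerivAt (fun y : ℝ => 2*(y-1)) 2 y := by
      simpa using ((hasDerivAt_id y).sub_const 1).const_mul 2
    have hden : HasDerivAt (fun y : ℝ => y+1) 1 y := (hasDerivAt_id y).add_const 1
    have h2 : HasDerivAt (fun y : ℝ => 2*(y-1)/(y+1)) (4/(y+1)^2) y := by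
      have := hnum.div hden hyp1
      rw [show (4:ℝ)/(y+1)^2 = (2 * (y + 1) - 2 * (y - 1) * 1) / (y + 1) ^ 2 by ring]
      exact this
    have h3 : HasDerivAt f (y⁻¹ - 4/(y+1)^2) y := h1.sub h2
    rw [h3.deriv]
    have h4 : 4/(y+1)^2 < 1/y := by
      rw [div_lt_div_iff₀ (by positivity) hy0]
      nlinarith [sq_nonneg (y-1)]
    have : (0:ℝ) < 1/y - 4/(y+1)^2 := by linarith
    simpa [one_div] using this
  have hmono : StrictMonoOn f (Set.Ici 1) :=
    strictMonoOn_of_deriv_pos (convex_Ici 1) hcont hderiv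
  have := hmono (self_mem_Ici) (mem_Ici.2 hx.le) hx
  simp only [hf, Real.log_one] at this
  norm_num at this
  linarith

/-- Lemma 3.3(a): for real `a > 0` and `c > 1`, with `x' = c·√a` and
`z = 1 − 8a·x'⁻² + 16·a^{3/2}·x'⁻³ − 8a²·x'⁻⁴`, one has
`(1/8)·log(x'⁴·z / ((c−1)·√a)⁴) > 1/(2c) − 3/(4c²)`. -/
theorem x4z_lower_bound_c (a c : ℝ) (ha : 0 < a) (hc : 1 < c) :
    (1 / 8) * Real.log
        ((c * Real.sqrt a) ^ 4 *
            (1 - 8 * a / (c * Real.sqrt a) ^ 2 + 16 * a ^ ((3 : ℝ) / 2) / (c * Real.sqrt a) ^ 3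
              - 8 * a ^ 2 / (c * Real.sqrt a) ^ 4) /
          ((c - 1) * Real.sqrt a) ^ 4)
      > 1 / (2 * c) - 3 / (4 * c ^ 2) := by
  set s := Real.sqrt a with hs
  have hs0 : 0 < s := Real.sqrt_pos.2 ha
  have hsa : s ^ 2 = a := Real.sq_sqrt ha.le
  have h32 : a ^ ((3 : ℝ) / 2) = s ^ 3 := by
    rw [hs, Real.sqrt_eq_rpow, ← Real.rpow_natCast (a ^ ((1:ℝ)/2)) 3,
      ← Real.rpow_mul ha.le]
    norm_num
  have hc0 : 0 < c := by linarith
  have hc1 : 0 < c - 1 := by linarith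
  set N : ℝ := c ^ 4 - 8 * c ^ 2 + 16 * c - 8 with hN
  set D : ℝ := (c - 1) ^ 4 with hD
  have hD0 : 0 < D := by positivity
  have hNmD : 0 < N - D := by
    have hd := hc1
    nlinarith [mul_nonneg hc1.le (sq_nonneg (2*(c-1)-1)), sq_nonneg (c-1)]
  have hN0 : 0 < N := by linarith
  have hX : (c * s) ^ 4 *
            (1 - 8 * a / (c * s) ^ 2 + 16 * a ^ ((3 : ℝ) / 2) / (c * s) ^ 3
              - 8 * a ^ 2 / (c * s) ^ 4) /
          ((c - 1) * s) ^ 4 = N / D := by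
    rw [h32, ← hsa, hN, hD]
    field_simp
  rw [hX]
  have hr1 : 1 < N / D := (one_lt_div hD0).2 (by linarith)
  have hlog := pade_log hr1
  have heq : 2 * (N / D - 1) / (N / D + 1) = 2 * (N - D) / (N + D) := by
    have h2 : N + D ≠ 0 := by linarith
    field_simp
  rw [heq] at hlog
  have hNpD : 0 < N + D := by linarith
  have h1 : 1 / (2 * c) - 3 / (4 * c ^ 2) = (2 * c - 3) / (4 * c ^ 2) := by
    field_simp; ring
  have heq2 : (1:ℝ)/8 * (2 * (N - D) / (N + D)) = (N - D) / (4 * (N + D)) := by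
    field_simp
    ring
  have hkey : (2 * c - 3) / (4 * c ^ 2) ≤ (N - D) / (4 * (N + D)) := by
    rw [div_le_div_iff₀ (by positivity) (by positivity)]
    nlinarith [mul_nonneg hc1.le (sq_nonneg (2*(c-1)-1)), sq_nonneg (c-1)]
  have hfin : (1:ℝ)/8 * (2 * (N - D) / (N + D)) < (1/8) * Real.log (N / D) := by
    linarith
  calc 1 / (2 * c) - 3 / (4 * c ^ 2) = (2 * c - 3) / (4 * c ^ 2) := h1
    _ ≤ (N - D) / (4 * (N + D)) := hkey
    _ = (1:ℝ)/8 * (2 * (N - D) / (N + D)) := heq2.symm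
    _ < (1/8) * Real.log (N / D) := hfin
end

section
/- Let a be a nonzero fourth-power-free integer and let P ∈ E_a(ℚ) be a point of infinite order. Write x(P) = u·v² with u a squarefree integer and v ∈ ℚ. Then for every positive integer n: if n is even, x(nP) is the square of a rational number, and if n is odd, x(nP) = u·w² for some w ∈ ℚ. -/
open Filter Real

open WeierstrassCurve.Affine

lemma eqnE {A x y : ℚ} (h : (Ecurve A).Nonsingular x y) : y ^ 2 = x ^ 3 + A * x := by
  have := ((Ecurve A).equation_iff x y).mp h.1
  simpa [Ecurve] using this

lemma negYE (A x y : ℚ) : (Ecurve A).negY x y = -y := by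
  simp [Ecurve, negY]

lemma xc_someE {A x y : ℚ} (h : (Ecurve A).Nonsingular x y) : xc (Point.some _ _ h) = x := rfl

lemma xc_add_mul_sq {A x₁ y₁ x₂ y₂ : ℚ} (h₁ : (Ecurve A).Nonsingular x₁ y₁)
    (h₂ : (Ecurve A).Nonsingular x₂ y₂)
    (hsum : Point.some _ _ h₁ + Point.some _ _ h₂ ≠ 0) :
    ∃ t : ℚ, xc (Point.some _ _ h₁ + Point.some _ _ h₂) * (x₁ * x₂) = t ^ 2 := by
  have e₁ := eqnE h₁
  have e₂ := eqnE h₂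
  have hA1 : (Ecurve A).a₁ = 0 := rfl
  have hA2 : (Ecurve A).a₂ = 0 := rfl
  have hA4 : (Ecurve A).a₄ = A := rfl
  by_cases hx : x₁ = x₂
  · subst hx
    have hy2 : y₂ = y₁ ∨ y₂ = -y₁ := by
      have h : y₂ ^ 2 = y₁ ^ 2 := by rw [e₁, e₂]
      exact sq_eq_sq_iff_eq_or_eq_neg.mp h
    rcases hy2 with rfl | rfl
    · have hy0 : y₂ ≠ 0 := by
        intro h0
        exact hsum (Point.add_of_Y_eq rfl (by rw [negYE, h0, neg_zero]))
      have hy : y₂ ≠ (Ecurve A).negY x₁ y₂ := by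
        rw [negYE]; intro h0; apply hy0; linarith
      rw [Point.add_of_Y_ne hy]
      refine ⟨x₁ * (x₁ ^ 2 - A) / (2 * y₂), ?_⟩
      rw [xc_someE, addX, slope_of_Y_ne rfl hy, negYE, hA1, hA2, hA4]
      have hyy : y₂ + y₂ ≠ 0 := by intro h; apply hy0; linarith
      field_simp
      linear_combination (-32*x₁^3) * e₂
    · exact absurd (Point.add_of_Y_eq rfl (by rw [negYE, neg_neg])) hsum
  · rw [Point.add_of_X_ne hx]
    refine ⟨(y₁ * x₂ - y₂ * x₁) / (x₁ - x₂), ?_⟩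
    rw [xc_someE, addX, slope_of_X_ne hx, hA1, hA2]
    have hx' : x₁ - x₂ ≠ 0 := sub_ne_zero.mpr hx
    field_simp
    linear_combination (x₁*x₂ - x₂^2) * e₁ + (x₁*x₂ - x₁^2) * e₂

lemma xy_ne_zero {A x y : ℚ} (h : (Ecurve A).Nonsingular x y)
    (hdb : Point.some _ _ h + Point.some _ _ h ≠ 0) : x ≠ 0 := by
  have e := eqnE h
  have hy : y ≠ 0 := by
    intro h0
    exact hdb (Point.add_of_Y_eq rfl (by rw [negYE, h0, neg_zero]))
  intro h0
  apply hy
  have : y ^ 2 = 0 := by rw [e, h0]; ring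
  exact pow_eq_zero_iff two_ne_zero |>.mp this

/-- Lemma 6.1(a): let `a` be a nonzero fourth-power-free integer, `P ∈ E_a(ℚ)` a point of
infinite order, and write `x(P) = u·v²` with `u` a squarefree integer and `v ∈ ℚ`. Then
for every `n ≥ 1`: if `n` is even then `x(nP)` is a rational square, and if `n` is odd
then `x(nP) = u·w²` for some `w ∈ ℚ`. -/
theorem x_nP_square_classes (a : ℤ) (ha : a ≠ 0)
    (hfree : ∀ p : ℕ, p.Prime → ¬ ((p : ℤ) ^ 4 ∣ a))
    (P : (Ecurve (a : ℚ)).Point)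
    (hP : ∀ n : ℕ, 0 < n → n • P ≠ 0)
    (u : ℤ) (hu : Squarefree u) (v : ℚ) (hx : xc P = (u : ℚ) * v ^ 2) :
    ∀ n : ℕ, 0 < n →
      (Even n → ∃ w : ℚ, xc (n • P) = w ^ 2) ∧
      (Odd n → ∃ w : ℚ, xc (n • P) = (u : ℚ) * w ^ 2) := by
  -- double of m•P is nonzero
  have hdb : ∀ m : ℕ, 0 < m → m • P + m • P ≠ 0 := by
    intro m hm
    have h2 := hP (2 * m) (by positivity)
    rwa [two_mul, add_nsmul] at h2
  have hu0 : (u : ℚ) ≠ 0 := Int.cast_ne_zero.mpr hu.ne_zero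
  -- key claim
  have key : ∀ n : ℕ, 0 < n → ∃ w : ℚ, w ≠ 0 ∧ xc (n • P) = (u : ℚ) ^ n * w ^ 2 := by
    intro n
    induction n with
    | zero => omega
    | succ n ih =>
      intro _
      -- P is a finite point with nonzero x
      have hP1 : (1 : ℕ) • P ≠ 0 := hP 1 one_pos
      rw [one_nsmul] at hP1
      rcases n.eq_zero_or_pos with rfl | hn
      · refine ⟨v, ?_, by rwa [one_nsmul, pow_one]⟩
        intro h0
        cases hp : P with
        | zero => exact hP1 hp
        | some _ _ h =>
          have hx0 : xc P ≠ 0 := by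
            rw [hp, xc_someE]
            exact xy_ne_zero h (by rw [← hp, ← one_nsmul P]; exact hdb 1 one_pos)
          rw [hx, h0] at hx0; simp at hx0
      · obtain ⟨w, hw0, hw⟩ := ih hn
        cases hQ : n • P with
        | zero => exact absurd hQ (hP n hn)
        | some xq yq hq =>
          cases hp : P with
          | zero => exact absurd hp hP1
          | some xp yp hp' =>
            have hsum : Point.some _ _ hq + Point.some _ _ hp' ≠ 0 := by
              rw [← hQ, ← hp]
              have := hP (n + 1) n.succ_pos
              rwa [succ_nsmul] at this
            obtain ⟨t, ht⟩ := xc_add_mul_sq hq hp' hsum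
            have hxq : xq = (u : ℚ) ^ n * w ^ 2 := by
              rw [← xc_someE hq, ← hQ]; exact hw
            have hxp : xp = (u : ℚ) * v ^ 2 := by
              rw [← xc_someE hp', ← hp]; exact hx
            have hxq0 : xq ≠ 0 := xy_ne_zero hq (by rw [← hQ]; exact hdb n hn)
            have hxp0 : xp ≠ 0 := xy_ne_zero hp' (by
              rw [← hp, ← one_nsmul P]; exact hdb 1 one_pos)
            have hv0 : v ≠ 0 := by
              intro h0; rw [hxp, h0] at hxp0; simp at hxp0
            have hX : xc ((n + 1) • P) * (xq * xp) = t ^ 2 := by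
              rw [succ_nsmul, hQ, hp]; exact ht
            have hX0 : xc ((n + 1) • P) ≠ 0 := by
              cases hR : (n + 1) • P with
              | zero => exact absurd hR (hP (n + 1) n.succ_pos)
              | some _ _ hr =>
                rw [xc_someE]
                exact xy_ne_zero hr (by rw [← hR]; exact hdb (n + 1) n.succ_pos)
            have ht0 : t ≠ 0 := by
              intro h0
              exact mul_ne_zero hX0 (mul_ne_zero hxq0 hxp0) (by rw [hX, h0]; ring)
            refine ⟨t / ((u : ℚ) ^ (n + 1) * w * v), ?_, ?_⟩
            · positivity
            · rw [← hp, hxq, hxp] at *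
              have hpow : ((u : ℚ)) ^ (n + 1) ≠ 0 := pow_ne_zero _ hu0
              field_simp
              linear_combination hX
  intro n hn
  obtain ⟨w, hw0, hw⟩ := key n hn
  constructor
  · rintro ⟨k, rfl⟩
    exact ⟨(u : ℚ) ^ k * w, by rw [hw]; ring⟩
  · rintro ⟨k, rfl⟩
    exact ⟨(u : ℚ) ^ k * w, by rw [hw]; ring⟩
end

section
/- Let a be a nonzero fourth-power-free integer and let P ∈ E_a(ℚ) be a point of infinite order. Write x(2P) = A₂/B₂ in lowest terms with A₂ ∈ ℤ and B₂ a positive integer. Then ord₂(B₂) ≥ 4 if a ≡ 1, 5, 7, 9, 13 or 15 (mod 16); ord₂(B₂) ≥ 2 if a ≡ 2, 3, 6, 8, 10, 11, 12 or 14 (mod 16); and ord₂(B₂) ≥ 0 if a ≡ 4 (mod 16). -/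
open Filter Real

local notation "v" => padicValRat 2

lemma val_int_nonneg (n : ℤ) : 0 ≤ v (n : ℚ) := by
  rw [padicValRat.of_int]; exact Int.natCast_nonneg _

lemma val_odd (n : ℤ) (h : n % 2 = 1) : v (n : ℚ) = 0 := by
  rw [padicValRat.of_int, padicValInt.eq_zero_of_not_dvd (by omega)]
  rfl

lemma val_two : v (2 : ℚ) = 1 := by
  simpa using padicValRat.self (p := 2) one_lt_two

lemma val_mul_odd (c m : ℤ) (hc : c ≠ 0) (hm : m % 2 = 1) :
    v ((c * m : ℤ) : ℚ) = v (c : ℚ) := by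
  rw [Int.cast_mul, padicValRat.mul (by exact_mod_cast hc)
    (by exact_mod_cast (by omega : m ≠ 0)), val_odd _ hm, add_zero]

lemma val_int_eq1 (n : ℤ) (h : n % 4 = 2) : v (n : ℚ) = 1 := by
  rw [show n = 2 * (2 * (n / 4) + 1) by omega, val_mul_odd _ _ (by norm_num) (by omega)]
  simpa using val_two

lemma val_int_eq2 (n : ℤ) (h : n % 8 = 4) : v (n : ℚ) = 2 := by
  rw [show n = 4 * (2 * (n / 8) + 1) by omega, val_mul_odd _ _ (by norm_num) (by omega),
    show ((4 : ℤ) : ℚ) = 2 ^ 2 by norm_num, padicValRat.pow _, val_two]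
  norm_num

lemma val_int_eq3 (n : ℤ) (h : n % 16 = 8) : v (n : ℚ) = 3 := by
  rw [show n = 8 * (2 * (n / 16) + 1) by omega, val_mul_odd _ _ (by norm_num) (by omega),
    show ((8 : ℤ) : ℚ) = 2 ^ 3 by norm_num, padicValRat.pow _, val_two]
  norm_num

lemma val_int_ge2 (n : ℤ) (hn : n ≠ 0) (h : n % 4 = 0) : 2 ≤ v (n : ℚ) := by
  have hq : (n / 4 : ℤ) ≠ 0 := by omega
  rw [show n = 4 * (n / 4) by omega, Int.cast_mul,
    padicValRat.mul (by norm_num) (by exact_mod_cast hq),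
    show ((4 : ℤ) : ℚ) = 2 ^ 2 by norm_num, padicValRat.pow _, val_two]
  have := val_int_nonneg (n / 4)
  omega

lemma val_int_ge3 (n : ℤ) (hn : n ≠ 0) (h : n % 8 = 0) : 3 ≤ v (n : ℚ) := by
  have hq : (n / 8 : ℤ) ≠ 0 := by omega
  rw [show n = 8 * (n / 8) by omega, Int.cast_mul,
    padicValRat.mul (by norm_num) (by exact_mod_cast hq),
    show ((8 : ℤ) : ℚ) = 2 ^ 3 by norm_num, padicValRat.pow _, val_two]
  have := val_int_nonneg (n / 8)
  omega

lemma den_val (q : ℚ) (k : ℕ) (h : v q ≤ -(k : ℤ)) : k ≤ padicValNat 2 q.den := by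
  rw [padicValRat_def] at h
  omega

lemma sq_odd_mod8 (n : ℤ) (h : n % 2 = 1) : n ^ 2 % 8 = 1 := by
  obtain ⟨k, hk⟩ : ∃ k, n = 2 * k + 1 := ⟨n / 2, by omega⟩
  obtain ⟨m, hm⟩ : ∃ m, k * (k + 1) = 2 * m := (Int.even_mul_succ_self k).exists_two_nsmul _
  have : n ^ 2 = 8 * m + 1 := by rw [hk]; linear_combination 4 * hm
  omega

lemma odd_num_den (t : ℚ) (ht : t ≠ 0) (hvt : v t = 0) :
    t.num % 2 = 1 ∧ (t.den : ℤ) % 2 = 1 := by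
  have hnum : t.num ≠ 0 := Rat.num_ne_zero.2 ht
  have hden : t.den ≠ 0 := t.den_nz
  have hcop := t.reduced
  rw [padicValRat_def] at hvt
  by_cases h1 : (2 : ℤ) ∣ t.num
  · exfalso
    have h1' : 2 ∣ t.num.natAbs := by rwa [← Int.natAbs_dvd_natAbs (a := 2)] at h1
    have h2 : ¬ (2 ∣ t.den) := by
      intro h2
      have h3 : (2 : ℕ) ∣ 1 := hcop ▸ Nat.dvd_gcd h1' h2
      norm_num at h3
    have e1 : padicValNat 2 t.den = 0 := padicValNat.eq_zero_of_not_dvd h2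
    have e2 : 1 ≤ padicValInt 2 t.num := by
      unfold padicValInt
      exact one_le_padicValNat_of_dvd (Int.natAbs_ne_zero.mpr hnum) h1'
    omega
  · constructor
    · omega
    · by_cases h2 : 2 ∣ t.den
      · have e1 : padicValInt 2 t.num = 0 := padicValInt.eq_zero_of_not_dvd h1
        have e2 : 1 ≤ padicValNat 2 t.den :=
          one_le_padicValNat_of_dvd hden h2
        omega
      · omega

lemma rep_sq_add (t : ℚ) (ht : t ≠ 0) (hvt : v t = 0) (c : ℤ)
    (hne : t ^ 2 + (c : ℚ) ≠ 0) :
    ∃ N : ℤ, N ≠ 0 ∧ N % 8 = (1 + c) % 8 ∧ v (t ^ 2 + (c : ℚ)) = v (N : ℚ) := by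
  obtain ⟨hnodd, hdodd⟩ := odd_num_den t ht hvt
  set n := t.num with hn
  set d := (t.den : ℤ) with hd
  have hd0 : (d : ℚ) ≠ 0 := by
    rw [hd]; exact_mod_cast (Nat.cast_ne_zero (R := ℚ)).mpr t.den_nz
  have htd : t * (d : ℚ) = (n : ℚ) := by
    rw [hn, hd]; push_cast; exact Rat.mul_den_eq_num t
  refine ⟨n ^ 2 + c * d ^ 2, ?_, ?_, ?_⟩
  · intro h0
    apply hne
    have hid : (t ^ 2 + (c : ℚ)) * (d : ℚ) ^ 2 = ((n ^ 2 + c * d ^ 2 : ℤ) : ℚ) := by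
      push_cast
      linear_combination (t * d + n) * htd
    rw [h0] at hid
    push_cast at hid
    exact (mul_eq_zero.mp hid).resolve_right (pow_ne_zero 2 hd0)
  · obtain ⟨j, hj⟩ : ∃ j, n ^ 2 = 8 * j + 1 := ⟨n ^ 2 / 8, by have := sq_odd_mod8 n hnodd; omega⟩
    obtain ⟨k, hk⟩ : ∃ k, d ^ 2 = 8 * k + 1 := ⟨d ^ 2 / 8, by have := sq_odd_mod8 d hdodd; omega⟩
    obtain ⟨m, hm⟩ : ∃ m, n ^ 2 + c * d ^ 2 = 8 * j + 8 * m + (1 + c) :=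
      ⟨c * k, by rw [hj, hk]; ring⟩
    omega
  · have hid : (t ^ 2 + (c : ℚ)) * (d : ℚ) ^ 2 = ((n ^ 2 + c * d ^ 2 : ℤ) : ℚ) := by
      push_cast
      linear_combination (t * d + n) * htd
    have := padicValRat.mul (p := 2) hne (pow_ne_zero 2 hd0)
    rw [hid] at this
    rw [this, padicValRat.pow (d : ℚ), val_odd d hdodd]
    ring

lemma val_four : v (4 : ℚ) = 2 := by
  have h2 : v (2 : ℚ) = 1 := by simpa using padicValRat.self (p := 2) one_lt_two
  rw [show (4 : ℚ) = 2 * 2 by norm_num, padicValRat.mul (p := 2) (by norm_num) (by norm_num), h2]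
  norm_num

lemma valrat_bound (a : ℤ) (ha : a ≠ 0) (x y : ℚ) (hy : y ≠ 0)
    (heq : y ^ 2 = x ^ 3 + a * x) (hM : x ^ 2 - (a : ℚ) ≠ 0) :
    (a % 8 = 1 ∨ a % 8 = 5 ∨ a % 8 = 7 →
      v ((x ^ 2 - a) ^ 2 / (4 * x * (x ^ 2 + a))) ≤ -4) ∧
    (a % 8 = 3 ∨ a % 4 = 2 ∨ a % 16 = 12 ∨ a % 16 = 8 →
      v ((x ^ 2 - a) ^ 2 / (4 * x * (x ^ 2 + a))) ≤ -2) := by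
  have haq : (a : ℚ) ≠ 0 := Int.cast_ne_zero.mpr ha
  have hx : x ≠ 0 := by
    intro h
    rw [h] at heq
    simp only [ne_eq, OfNat.ofNat_ne_zero, not_false_eq_true, zero_pow, mul_zero, add_zero]
      at heq
    exact hy (pow_eq_zero_iff (by norm_num) |>.mp heq)
  have hfac : y ^ 2 = x * (x ^ 2 + a) := by linear_combination heq
  have hN : x ^ 2 + (a : ℚ) ≠ 0 := by
    intro h
    rw [h, mul_zero] at hfac
    exact hy (pow_eq_zero_iff (by norm_num) |>.mp hfac)
  have hx2 : x ^ 2 ≠ 0 := pow_ne_zero 2 hx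
  -- valuation of y relation
  have hvw : 2 * v y = v x + v (x ^ 2 + a) := by
    have := padicValRat.pow (p := 2) y (k := 2)
    rw [hfac, padicValRat.mul (p := 2) hx hN] at this
    omega
  -- valuation of the target
  have hT : v ((x ^ 2 - a) ^ 2 / (4 * x * (x ^ 2 + a))) =
      2 * v (x ^ 2 - a) - (2 + v x + v (x ^ 2 + a)) := by
    rw [padicValRat.div (p := 2) (pow_ne_zero 2 hM)
        (mul_ne_zero (mul_ne_zero (by norm_num) hx) hN),
      padicValRat.pow (p := 2) (x ^ 2 - (a : ℚ)),
      padicValRat.mul (p := 2) (mul_ne_zero (by norm_num) hx) hN,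
      padicValRat.mul (p := 2) (by norm_num) hx, val_four]
    ring
  have hMsub : x ^ 2 - (a : ℚ) = x ^ 2 + ((-a : ℤ) : ℚ) := by push_cast; ring
  have hMsub' : x ^ 2 + ((-a : ℤ) : ℚ) ≠ 0 := by rw [← hMsub]; exact hM
  rcases lt_trichotomy (v x) 0 with hul | hu0 | hug
  · -- u < 0
    have hx2v : v (x ^ 2) = 2 * v x := by
      rw [padicValRat.pow (p := 2) x]; norm_num
    have hB : v (x ^ 2 + a) = 2 * v x := by
      rw [padicValRat.add_eq_of_lt (p := 2) hN hx2 haq (by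
        rw [hx2v]; have := val_int_nonneg a; omega), hx2v]
    have hA : v (x ^ 2 - a) = 2 * v x := by
      rw [hMsub, padicValRat.add_eq_of_lt (p := 2) hMsub' hx2
        (Int.cast_ne_zero.mpr (by omega : -a ≠ 0)) (by
          rw [hx2v]; have := val_int_nonneg (-a); omega), hx2v]
    constructor <;> intro _ <;> rw [hT, hA, hB] <;> omega
  · -- u = 0
    obtain ⟨N, hN0, hNmod, hNval⟩ := rep_sq_add x hx hu0 a hN
    obtain ⟨M, hM0, hMmod, hMval⟩ := rep_sq_add x hx hu0 (-a) hMsub'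
    rw [← hMsub] at hMval
    constructor
    · rintro (h | h | h)
      · exfalso
        rw [hNval, val_int_eq1 N (by omega)] at hvw
        omega
      · exfalso
        rw [hNval, val_int_eq1 N (by omega)] at hvw
        omega
      · have hA : v (x ^ 2 - a) = 1 := by rw [hMval, val_int_eq1 M (by omega)]
        have hB : 3 ≤ v (x ^ 2 + a) := by rw [hNval]; exact val_int_ge3 N hN0 (by omega)
        rw [hNval] at hvw
        rw [hT, hA, hNval]
        omega
    · rintro (h | h | h | h)
      · have hA : v (x ^ 2 - a) = 1 := by rw [hMval, val_int_eq1 M (by omega)]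
        have hB : v (x ^ 2 + a) = 2 := by rw [hNval, val_int_eq2 N (by omega)]
        rw [hT, hA, hB]; omega
      all_goals {
        have hA : v (x ^ 2 - a) = 0 := by rw [hMval, val_odd M (by omega)]
        have hB : v (x ^ 2 + a) = 0 := by rw [hNval, val_odd N (by omega)]
        rw [hT, hA, hB, hu0]; omega }
  · -- u > 0
    have hx2v : v (x ^ 2) = 2 * v x := by
      rw [padicValRat.pow (p := 2) x]; norm_num
    -- helper to compute v (x^2 + c) when v c < 2u
    have key : ∀ c : ℤ, c ≠ 0 → (h0 : x ^ 2 + (c : ℚ) ≠ 0) → v (c : ℚ) < 2 * v x →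
        v (x ^ 2 + c) = v (c : ℚ) := by
      intro c hc h0 hlt
      rw [add_comm]
      rw [add_comm] at h0
      rw [padicValRat.add_eq_of_lt (p := 2) h0 (Int.cast_ne_zero.mpr hc) hx2
        (by rw [hx2v]; exact hlt)]
    constructor
    · rintro (h | h | h) <;>
      · have hva : v ((a : ℚ)) = 0 := val_odd a (by omega)
        have hva' : v ((-a : ℤ) : ℚ) = 0 := val_odd (-a) (by omega)
        have hB : v (x ^ 2 + a) = 0 := by rw [key a ha hN (by omega), hva]
        have hA : v (x ^ 2 - a) = 0 := by
          rw [hMsub, key (-a) (by omega) hMsub' (by omega), hva']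
        rw [hT, hA, hB]
        omega
    · rintro (h | h | h | h)
      · -- a % 8 = 3, u > 0 : a odd
        have hva : v ((a : ℚ)) = 0 := val_odd a (by omega)
        have hva' : v ((-a : ℤ) : ℚ) = 0 := val_odd (-a) (by omega)
        have hB : v (x ^ 2 + a) = 0 := by rw [key a ha hN (by omega), hva]
        have hA : v (x ^ 2 - a) = 0 := by
          rw [hMsub, key (-a) (by omega) hMsub' (by omega), hva']
        rw [hT, hA, hB]
        omega
      · -- a % 4 = 2
        have hva : v ((a : ℚ)) = 1 := val_int_eq1 a h
        have hva' : v ((-a : ℤ) : ℚ) = 1 := val_int_eq1 (-a) (by omega)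
        have hB : v (x ^ 2 + a) = 1 := by rw [key a ha hN (by omega), hva]
        have hA : v (x ^ 2 - a) = 1 := by
          rw [hMsub, key (-a) (by omega) hMsub' (by omega), hva']
        rw [hT, hA, hB]
        omega
      · -- a % 16 = 12
        have hva : v ((a : ℚ)) = 2 := val_int_eq2 a (by omega)
        rcases eq_or_lt_of_le (by omega : (1 : ℤ) ≤ v x) with hu1 | hu2
        · -- u = 1 : the delicate case
          set t := x / 2 with htdef
          have ht : t ≠ 0 := div_ne_zero hx (by norm_num)
          have hx2t : x = 2 * t := by rw [htdef]; ring
          have hvt : v t = 0 := by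
            rw [htdef, padicValRat.div (p := 2) hx (by norm_num),
              show (2 : ℚ) = ((2 : ℤ) : ℚ) by norm_num, val_int_eq1 2 (by norm_num)]
            omega
          obtain ⟨a', ha', ha'mod⟩ : ∃ a', a = 4 * a' ∧ a' % 4 = 3 :=
            ⟨a / 4, by omega, by omega⟩
          have ha'0 : a' ≠ 0 := by omega
          have hNid : x ^ 2 + (a : ℚ) = 4 * (t ^ 2 + (a' : ℚ)) := by
            rw [hx2t, ha']; push_cast; ring
          have hMid : x ^ 2 - (a : ℚ) = 4 * (t ^ 2 + ((-a' : ℤ) : ℚ)) := by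
            rw [hx2t, ha']; push_cast; ring
          have hN' : t ^ 2 + (a' : ℚ) ≠ 0 := by
            intro h0; apply hN; rw [hNid, h0, mul_zero]
          have hM' : t ^ 2 + ((-a' : ℤ) : ℚ) ≠ 0 := by
            intro h0; apply hM; rw [hMid, h0, mul_zero]
          obtain ⟨N, hN0, hNmod, hNval⟩ := rep_sq_add t ht hvt a' hN'
          obtain ⟨M, hM0, hMmod, hMval⟩ := rep_sq_add t ht hvt (-a') hM'
          have hvN2 : 2 ≤ v (N : ℚ) := val_int_ge2 N hN0 (by omega)
          have hvM : v (M : ℚ) = 1 := val_int_eq1 M (by omega)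
          have hB : v (x ^ 2 + a) = 2 + v (N : ℚ) := by
            rw [hNid, padicValRat.mul (p := 2) (by norm_num) hN', val_four, hNval]
          have hA : v (x ^ 2 - a) = 3 := by
            rw [hMid, padicValRat.mul (p := 2) (by norm_num) hM', val_four, hMval, hvM]
            norm_num
          rw [hB] at hvw
          rw [hT, hA, hB]
          omega
        · -- u ≥ 2
          have hva' : v ((-a : ℤ) : ℚ) = 2 := val_int_eq2 (-a) (by omega)
          have hB : v (x ^ 2 + a) = 2 := by rw [key a ha hN (by omega), hva]
          have hA : v (x ^ 2 - a) = 2 := by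
            rw [hMsub, key (-a) (by omega) hMsub' (by omega), hva']
          rw [hT, hA, hB]
          omega
      · -- a % 16 = 8
        have hva : v ((a : ℚ)) = 3 := val_int_eq3 a h
        rcases eq_or_lt_of_le (by omega : (1 : ℤ) ≤ v x) with hu1 | hu2
        · -- u = 1: contradiction via parity
          exfalso
          have hB : v (x ^ 2 + a) = 2 := by
            rw [padicValRat.add_eq_of_lt (p := 2) hN hx2 haq (by omega), hx2v]
            omega
          omega
        · -- u ≥ 2
          have hva' : v ((-a : ℤ) : ℚ) = 3 := val_int_eq3 (-a) (by omega)
          have hB : v (x ^ 2 + a) = 3 := by rw [key a ha hN (by omega), hva]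
          have hA : v (x ^ 2 - a) = 3 := by
            rw [hMsub, key (-a) (by omega) hMsub' (by omega), hva']
          rw [hT, hA, hB]
          omega

lemma xsq_ne (a : ℤ) (ha : a ≠ 0)
    (hcond : a % 2 = 1 ∨ a % 4 = 2 ∨ a % 16 = 12 ∨ a % 16 = 8)
    (x y : ℚ) (hy : y ≠ 0) (heq : y ^ 2 = x ^ 3 + a * x) : x ^ 2 - (a : ℚ) ≠ 0 := by
  intro h0
  have hxa : x ^ 2 = (a : ℚ) := by linarith [h0]
  have hx : x ≠ 0 := by
    intro h
    rw [h] at hxa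
    exact (Int.cast_ne_zero.mpr ha) (by exact_mod_cast (by simpa using hxa.symm : a = 0))
  have h2x3 : y ^ 2 = 2 * x ^ 3 := by
    rw [heq, ← hxa]; ring
  have hvy : 2 * v y = 1 + 3 * v x := by
    have h1 := padicValRat.pow (p := 2) y (k := 2)
    have h2 := padicValRat.pow (p := 2) x (k := 3)
    rw [h2x3, padicValRat.mul (p := 2) (by norm_num) (pow_ne_zero 3 hx), val_two, h2] at h1
    push_cast at h1
    omega
  have hvx : 2 * v x = v ((a : ℚ)) := by
    have h2 := padicValRat.pow (p := 2) x (k := 2)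
    rw [hxa] at h2
    push_cast at h2
    omega
  rcases hcond with h | h | h | h
  · rw [val_odd a h] at hvx; omega
  · rw [val_int_eq1 a h] at hvx; omega
  · -- a % 16 = 12 : a = 4 a' with a' ≡ 3 mod 4, and a' is a square of a 2-adic unit
    rw [val_int_eq2 a (by omega)] at hvx
    obtain ⟨a', ha', ha'mod⟩ : ∃ a', a = 4 * a' ∧ a' % 4 = 3 := ⟨a / 4, by omega, by omega⟩
    set t := x / 2 with htdef
    have ht : t ≠ 0 := div_ne_zero hx (by norm_num)
    have hvt : v t = 0 := by
      rw [htdef, padicValRat.div (p := 2) hx (by norm_num), val_two]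
      omega
    have hta : t ^ 2 = (a' : ℚ) := by
      rw [htdef]
      rw [ha'] at hxa
      push_cast at hxa ⊢
      field_simp
      linarith [hxa]
    clear_value t
    obtain ⟨hnodd, hdodd⟩ := odd_num_den t ht hvt
    have hd0 : ((t.den : ℤ) : ℚ) ≠ 0 := by exact_mod_cast (Nat.cast_ne_zero (R := ℚ)).mpr t.den_nz
    have htd : t * ((t.den : ℤ) : ℚ) = (t.num : ℚ) := by push_cast; exact Rat.mul_den_eq_num t
    have hint : (t.num ^ 2 : ℤ) = a' * (t.den : ℤ) ^ 2 := by
      have : ((t.num ^ 2 : ℤ) : ℚ) = ((a' * (t.den : ℤ) ^ 2 : ℤ) : ℚ) := by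
        push_cast
        linear_combination (-(t * t.den + t.num)) * htd + ((t.den : ℤ) : ℚ) ^ 2 * hta
      exact_mod_cast this
    have h1 := sq_odd_mod8 t.num hnodd
    have h2 := sq_odd_mod8 (t.den : ℤ) hdodd
    obtain ⟨j, hj⟩ : ∃ j, (t.num : ℤ) ^ 2 = 8 * j + 1 := ⟨t.num ^ 2 / 8, by omega⟩
    obtain ⟨k, hk⟩ : ∃ k, ((t.den : ℤ)) ^ 2 = 8 * k + 1 := ⟨(t.den : ℤ) ^ 2 / 8, by omega⟩
    obtain ⟨m, hm⟩ : ∃ m, 8 * j + 1 = 8 * m + a' := ⟨a' * k, by rw [← hj, hint, hk]; ring⟩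
    omega
  · rw [val_int_eq3 a h] at hvx; omega


/-- Lemma 6.1(b): let `a` be a nonzero fourth-power-free integer and `P ∈ E_a(ℚ)` a point
of infinite order; write `x(2P) = A₂/B₂` in lowest terms with `B₂ > 0`. Then
`ord₂(B₂) ≥ 4` if `a ≡ 1,5,7,9,13,15 (mod 16)`, `ord₂(B₂) ≥ 2` if
`a ≡ 2,3,6,8,10,11,12,14 (mod 16)`, and `ord₂(B₂) ≥ 0` if `a ≡ 4 (mod 16)`. -/
theorem ord_two_B2_lower_bounds (a : ℤ) (ha : a ≠ 0)
    (hfree : ∀ p : ℕ, p.Prime → ¬ ((p : ℤ) ^ 4 ∣ a))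
    (P : (Ecurve (a : ℚ)).Point)
    (hP : ∀ n : ℕ, 0 < n → n • P ≠ 0) :
    (a % 16 ∈ ({1, 5, 7, 9, 13, 15} : Set ℤ) →
      4 ≤ padicValNat 2 (xc (2 • P)).den) ∧
    (a % 16 ∈ ({2, 3, 6, 8, 10, 11, 12, 14} : Set ℤ) →
      2 ≤ padicValNat 2 (xc (2 • P)).den) ∧
    (a % 16 = 4 → 0 ≤ padicValNat 2 (xc (2 • P)).den) := by
  rcases P with _ | @⟨x, y, hns⟩
  · exact absurd (by rw [one_nsmul]; rfl) (hP 1 one_pos)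
  · have haq : (a : ℚ) ≠ 0 := Int.cast_ne_zero.mpr ha
    have heq : y ^ 2 = x ^ 3 + (a : ℚ) * x := by
      have he := (WeierstrassCurve.Affine.equation_iff (W := Ecurve (a : ℚ)) x y).mp hns.1
      simp only [Ecurve] at he
      linear_combination he
    have hy : y ≠ 0 := by
      intro h0
      apply hP 2 two_pos
      rw [two_nsmul]
      exact WeierstrassCurve.Affine.Point.add_self_of_Y_eq
        (by simp [WeierstrassCurve.Affine.negY, Ecurve, h0])
    have hx : x ≠ 0 := by
      intro h
      rw [h] at heq
      simp only [ne_eq, OfNat.ofNat_ne_zero, not_false_eq_true, zero_pow, mul_zero,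
        add_zero] at heq
      exact hy (pow_eq_zero_iff (by norm_num) |>.mp heq)
    have hyne : y ≠ (Ecurve (a : ℚ)).negY x y := by
      simp only [WeierstrassCurve.Affine.negY, Ecurve]
      intro h0
      apply hy
      have : y + y = 0 := by linear_combination h0
      linarith [this]
    have hfac : y ^ 2 = x * (x ^ 2 + a) := by linear_combination heq
    have hN : x ^ 2 + (a : ℚ) ≠ 0 := by
      intro h
      rw [h, mul_zero] at hfac
      exact hy (pow_eq_zero_iff (by norm_num) |>.mp hfac)
    have h2P : 2 • (WeierstrassCurve.Affine.Point.some _ _ hns) =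
        WeierstrassCurve.Affine.Point.some _ _
          (WeierstrassCurve.Affine.nonsingular_add hns hns fun hxy => hyne hxy.right) := by
      rw [two_nsmul]
      exact WeierstrassCurve.Affine.Point.add_self_of_Y_ne hyne
    have hxc : xc (2 • (WeierstrassCurve.Affine.Point.some _ _ hns)) =
        (x ^ 2 - a) ^ 2 / (4 * x * (x ^ 2 + a)) := by
      have hs : (Ecurve (a : ℚ)).slope x x y y = (3 * x ^ 2 + a) / (2 * y) := by
        rw [WeierstrassCurve.Affine.slope_of_Y_ne rfl hyne]
        simp only [WeierstrassCurve.Affine.negY, Ecurve]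
        rw [div_eq_div_iff (by intro h0; apply hy; linarith [h0]) (by
          intro h0; apply hy; linarith [h0])]
        ring
      rw [h2P]
      show (Ecurve (a : ℚ)).addX x x ((Ecurve (a : ℚ)).slope x x y y) = _
      rw [hs]
      simp only [WeierstrassCurve.Affine.addX, Ecurve]
      field_simp
      ring_nf
      linear_combination (-(4 * (a : ℚ) ^ 2 + 24 * (a : ℚ) * x ^ 2 + 36 * x ^ 4)) * heq
    refine ⟨?_, ?_, fun _ => Nat.zero_le _⟩
    · intro hmem
      simp only [Set.mem_insert_iff, Set.mem_singleton_iff] at hmem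
      have hodd : a % 2 = 1 := by omega
      have hM := xsq_ne a ha (Or.inl hodd) x y hy heq
      have hb := (valrat_bound a ha x y hy heq hM).1 (by omega)
      rw [hxc]
      exact den_val _ 4 (by exact_mod_cast hb)
    · intro hmem
      simp only [Set.mem_insert_iff, Set.mem_singleton_iff] at hmem
      have hcond : a % 2 = 1 ∨ a % 4 = 2 ∨ a % 16 = 12 ∨ a % 16 = 8 := by omega
      have hM := xsq_ne a ha hcond x y hy heq
      have hb := (valrat_bound a ha x y hy heq hM).2 (by omega)
      rw [hxc]
      exact den_val _ 2 (by exact_mod_cast hb)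
end

section
/- Let a be a nonzero fourth-power-free integer and let P ∈ E_a(ℚ) be a point of infinite order. Write x(P) = A₁/B₁ and x(2P) = A₂/B₂ in lowest terms with A₁, A₂ ∈ ℤ and B₁, B₂ positive integers. If a ≢ 4 (mod 16), or if the 2-adic valuation of the rational number x(P) is not equal to 1, then ord₂(B₂) ≥ ord₂(B₁) + 2. -/
open Filter Real

open WeierstrassCurve.Affine WeierstrassCurve.Affine.Point

section Helpers

private lemma sq_mod8' (p : ℤ) (hp : p % 2 = 1) : p ^ 2 % 8 = 1 := by
  obtain ⟨k, rfl⟩ : ∃ k, p = 2 * k + 1 := ⟨p / 2, by omega⟩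
  obtain ⟨m, hm⟩ := Int.even_mul_succ_self k
  have : (2 * k + 1) ^ 2 = 8 * m + 1 := by rw [show (8 : ℤ) * m = 4 * (m + m) by ring, ← hm]; ring
  omega

private lemma valInt_eq_one' {N : ℤ} (h : N % 4 = 2) : padicValInt 2 N = 1 := by
  have h1 : ((2:ℕ):ℤ) ^ 1 ∣ N := by push_cast; omega
  have h2 : ¬ ((2:ℕ):ℤ) ^ 2 ∣ N := by push_cast; omega
  rw [padicValInt_dvd_iff 1 N] at h1
  rw [padicValInt_dvd_iff 2 N] at h2
  omega

private lemma valInt_ge_two' {N : ℤ} (hN : N ≠ 0) (h : N % 4 = 0) : 2 ≤ padicValInt 2 N := by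
  have h2 : ((2:ℕ):ℤ) ^ 2 ∣ N := by push_cast; omega
  rw [padicValInt_dvd_iff 2 N] at h2
  omega

private lemma unit_sq_add' (u : ℚ) (hu0 : u ≠ 0) (hu : padicValRat 2 u = 0) (b : ℤ)
    (hne : u ^ 2 + (b : ℚ) ≠ 0) :
    ∃ N : ℤ, N ≠ 0 ∧ N % 8 = (1 + b % 8) % 8 ∧
      padicValRat 2 (u ^ 2 + (b : ℚ)) = padicValInt 2 N := by
  have hnum : u.num ≠ 0 := Rat.num_ne_zero.2 hu0
  have hval : padicValInt 2 u.num = padicValNat 2 u.den := by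
    have := padicValRat_def 2 u; omega
  have hpodd : ¬ (2:ℤ) ∣ u.num := by
    intro hdvd
    have h1 : ((2:ℕ):ℤ) ^ 1 ∣ u.num := by push_cast; simpa using hdvd
    rw [padicValInt_dvd_iff 1 u.num] at h1
    have h2 : (2:ℕ) ∣ u.den := dvd_of_one_le_padicValNat (by omega)
    have h3 : (2:ℕ) ∣ u.num.natAbs := Int.natAbs_dvd_natAbs.mpr hdvd
    have h4 := Nat.dvd_gcd h3 h2
    have h5 : u.num.natAbs.gcd u.den = 1 := u.reduced
    omega
  have hqodd : ¬ (2:ℕ) ∣ u.den := by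
    intro hdvd
    have h2 : 1 ≤ padicValNat 2 u.den := one_le_padicValNat_of_dvd u.den_nz hdvd
    have h1 : ((2:ℕ):ℤ) ^ 1 ∣ u.num := by
      rw [padicValInt_dvd_iff 1 u.num]; omega
    exact hpodd (by simpa using h1)
  set p := u.num with hp
  set q := (u.den : ℤ) with hq
  have hq0 : (q:ℚ) ≠ 0 := by
    rw [hq]; push_cast; exact Nat.cast_ne_zero.2 u.den_nz
  have hurep : (u:ℚ) = (p:ℚ) / (q:ℚ) := by rw [hp, hq]; push_cast; exact (Rat.num_div_den u).symm
  have hkey : u ^ 2 + (b:ℚ) = ((p ^ 2 + b * q ^ 2 : ℤ) : ℚ) / ((q ^ 2 : ℤ) : ℚ) := by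
    rw [hurep]; push_cast; field_simp
  have hNne : ((p ^ 2 + b * q ^ 2 : ℤ) : ℚ) ≠ 0 := by
    intro h0; apply hne; rw [hkey, h0, zero_div]
  refine ⟨p ^ 2 + b * q ^ 2, by exact_mod_cast hNne, ?_, ?_⟩
  · have hp8 : p ^ 2 % 8 = 1 := sq_mod8' p (by omega)
    have hq8 : q ^ 2 % 8 = 1 := sq_mod8' q (by
      have : ¬ (2:ℤ) ∣ q := by
        intro h; rw [hq] at h; exact hqodd (by exact_mod_cast h)
      omega)
    have hm := Int.mul_emod b (q ^ 2) 8
    rw [hq8, mul_one] at hm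
    have ha := Int.add_emod (p ^ 2) (b * q ^ 2) 8
    omega
  · rw [hkey, padicValRat.div (p := 2) hNne (by positivity)]
    rw [padicValRat.of_int, padicValRat.of_int]
    have : padicValInt 2 (q ^ 2) = 0 := padicValInt.eq_zero_of_not_dvd (by
      intro hdvd
      have h6 := Int.Prime.dvd_pow' Nat.prime_two hdvd
      rw [hq] at h6
      exact hqodd (by exact_mod_cast h6))
    rw [this]; ring

private lemma unit_sq_add_one_mod_four' (u : ℚ) (hu0 : u ≠ 0) (hu : padicValRat 2 u = 0) (b : ℤ)
    (hb : b % 4 = 1) (hne : u ^ 2 + (b : ℚ) ≠ 0) :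
    padicValRat 2 (u ^ 2 + (b : ℚ)) = 1 := by
  obtain ⟨N, hN0, hN8, hNv⟩ := unit_sq_add' u hu0 hu b hne
  rw [hNv, valInt_eq_one' (by omega)]; rfl

private lemma unit_sq_add_three_mod_four' (u : ℚ) (hu0 : u ≠ 0) (hu : padicValRat 2 u = 0) (b : ℤ)
    (hb : b % 4 = 3) (hne : u ^ 2 + (b : ℚ) ≠ 0) :
    2 ≤ padicValRat 2 (u ^ 2 + (b : ℚ)) := by
  obtain ⟨N, hN0, hN8, hNv⟩ := unit_sq_add' u hu0 hu b hne
  rw [hNv]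
  have := valInt_ge_two' hN0 (by omega)
  exact_mod_cast this

private lemma den_val' (r : ℚ) (hr : r ≠ 0) :
    (padicValNat 2 r.den : ℤ) = max 0 (-padicValRat 2 r) := by
  have hdef := padicValRat_def 2 r
  by_cases hd : (2:ℕ) ∣ r.den
  · have h1 : 1 ≤ padicValNat 2 r.den := one_le_padicValNat_of_dvd r.den_nz hd
    have h2 : padicValInt 2 r.num = 0 := by
      apply padicValInt.eq_zero_of_not_dvd
      intro hdvd
      have h3 : (2:ℕ) ∣ r.num.natAbs := Int.natAbs_dvd_natAbs.mpr (by exact_mod_cast hdvd)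
      have h4 := Nat.dvd_gcd h3 hd
      have h5 : r.num.natAbs.gcd r.den = 1 := r.reduced
      omega
    omega
  · have h1 : padicValNat 2 r.den = 0 := padicValNat.eq_zero_of_not_dvd hd
    omega

private lemma val_two' : padicValRat 2 (2:ℚ) = 1 := by
  have := padicValRat.self (p := 2) one_lt_two
  exact_mod_cast this

private lemma val_four' : padicValRat 2 (4:ℚ) = 2 := by
  have h : (4:ℚ) = (2:ℚ) ^ 2 := by norm_num
  rw [h, padicValRat.pow (2:ℚ), val_two']
  norm_num

end Helpers

/-- Lemma 6.1(c): let `a` be a nonzero fourth-power-free integer and `P ∈ E_a(ℚ)` a point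
of infinite order; write `x(P) = A₁/B₁` and `x(2P) = A₂/B₂` in lowest terms with
`B₁, B₂ > 0`. If `a ≢ 4 (mod 16)`, or if the 2-adic valuation of `x(P)` is not `1`, then
`ord₂(B₂) ≥ ord₂(B₁) + 2`. -/
theorem ord_two_B2_vs_B1 (a : ℤ) (ha : a ≠ 0)
    (hfree : ∀ p : ℕ, p.Prime → ¬ ((p : ℤ) ^ 4 ∣ a))
    (P : (Ecurve (a : ℚ)).Point)
    (hP : ∀ n : ℕ, 0 < n → n • P ≠ 0)
    (hcase : a % 16 ≠ 4 ∨ padicValRat 2 (xc P) ≠ 1) :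
    padicValNat 2 (xc (2 • P)).den ≥ padicValNat 2 (xc P).den + 2 := by
  rcases P with _ | @⟨x, y, h⟩
  · exact absurd (one_smul ℕ (0 : (Ecurve (a:ℚ)).Point)) (hP 1 one_pos)
  have hxcP : xc (Point.some _ _ h) = x := rfl
  rw [hxcP] at hcase ⊢
  have haQ : ((a:ℚ)) ≠ 0 := Int.cast_ne_zero.mpr ha
  have hy : y ^ 2 = x ^ 3 + a * x := by
    have := (equation_iff (W := Ecurve (a:ℚ)) x y).mp h.1
    simpa [Ecurve] using this
  have hy0 : y ≠ 0 := by
    intro h0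
    apply hP 2 two_pos
    rw [two_smul]
    exact add_self_of_Y_eq (by simp [Ecurve, negY, h0])
  have hyne : y ≠ (Ecurve (a:ℚ)).negY x y := by
    simp only [Ecurve, negY]
    intro hc
    apply hy0
    linarith [hc]
  have h2P : (2 : ℕ) • Point.some _ _ h = Point.some _ _
      (nonsingular_add h h (fun hxy => hyne hxy.2)) := by
    rw [two_smul]
    exact add_of_Y_ne hyne
  have hX2 : xc ((2 : ℕ) • Point.some _ _ h) = (x ^ 2 - a) ^ 2 / (4 * y ^ 2) := by
    rw [h2P]
    show (Ecurve (a:ℚ)).addX x x ((Ecurve (a:ℚ)).slope x x y y) = _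
    rw [slope_of_Y_ne rfl hyne]
    simp only [Ecurve, addX, negY]
    rw [show y - (-y - 0*x - 0) = 2*y by ring]
    field_simp
    linear_combination (-32*x) * hy
  have hx0 : x ≠ 0 := by
    intro h0
    apply hy0
    have : y ^ 2 = 0 := by rw [hy, h0]; ring
    exact pow_eq_zero_iff (two_ne_zero) |>.mp this
  have hymul : y ^ 2 = x * (x ^ 2 + a) := by linear_combination hy
  have hxpa : x ^ 2 + (a:ℚ) ≠ 0 := by
    intro h0
    apply hy0
    have : y ^ 2 = 0 := by rw [hymul, h0, mul_zero]
    exact pow_eq_zero_iff (two_ne_zero) |>.mp this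
  by_cases hxa : x ^ 2 = (a:ℚ)
  · -- excluded: 2P would be the 2-torsion point (0,0), so 4P = 0
    exfalso
    obtain ⟨xQ, yQ, hQns, hQeq⟩ :
        ∃ xQ : ℚ, ∃ yQ : ℚ, ∃ hQns : (Ecurve (a:ℚ)).Nonsingular xQ yQ,
          (2 : ℕ) • Point.some _ _ h = Point.some _ _ hQns := ⟨_, _, _, h2P⟩
    rw [hQeq] at hX2
    have hxQ : xQ = 0 := by
      have : xc (Point.some _ _ hQns) = xQ := rfl
      rw [this] at hX2
      rw [hX2, hxa]
      simp
    have hyQ : yQ = 0 := by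
      have heq := (equation_iff (W := Ecurve (a:ℚ)) xQ yQ).mp hQns.1
      simp only [Ecurve] at heq
      rw [hxQ] at heq
      have : yQ ^ 2 = 0 := by linarith [heq]
      exact pow_eq_zero_iff (two_ne_zero) |>.mp this
    apply hP 4 (by norm_num)
    have h4 : (4 : ℕ) • Point.some _ _ h = ((2:ℕ) • Point.some _ _ h) + ((2:ℕ) • Point.some _ _ h) := by
      rw [show (4:ℕ) = 2 * 2 from rfl, mul_smul, two_smul]
    rw [h4, hQeq]
    exact add_self_of_Y_eq (by simp [Ecurve, negY, hyQ, hxQ])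
  -- main case
  have hsub : x ^ 2 - (a:ℚ) ≠ 0 := sub_ne_zero.mpr hxa
  have hX2ne : xc ((2:ℕ) • Point.some _ _ h) ≠ 0 := by
    rw [hX2]
    exact div_ne_zero (pow_ne_zero 2 hsub) (by positivity)
  -- valuations
  set e := padicValRat 2 x with he
  set vm := padicValRat 2 (x ^ 2 - a) with hvm
  set vp := padicValRat 2 (x ^ 2 + a) with hvp
  set vy := padicValRat 2 y with hvy
  set A := padicValInt 2 a with hA
  have hvalA : padicValRat 2 ((a:ℤ):ℚ) = A := padicValRat.of_int
  have hvx2 : padicValRat 2 (x ^ 2) = 2 * e := by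
    rw [padicValRat.pow x]; push_cast; ring
  have hyv : 2 * vy = e + vp := by
    have h1 : padicValRat 2 (y ^ 2) = 2 * vy := by
      rw [padicValRat.pow y]; push_cast; ring
    rw [hymul, padicValRat.mul hx0 hxpa] at h1
    omega
  have hvX2 : padicValRat 2 (xc ((2:ℕ) • Point.some _ _ h)) = 2 * vm - 2 - 2 * vy := by
    rw [hX2, padicValRat.div (pow_ne_zero 2 hsub) (by positivity),
      padicValRat.mul (by norm_num : (4:ℚ) ≠ 0) (pow_ne_zero 2 hy0),
      padicValRat.pow (x ^ 2 - (a:ℚ)), padicValRat.pow y, val_four']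
    push_cast; ring
  -- facts about A
  have hAdvd : ((2:ℕ):ℤ) ^ A ∣ a := padicValInt_dvd a
  have hAnotdvd : ¬ ((2:ℕ):ℤ) ^ (A + 1) ∣ a := by
    rw [padicValInt_dvd_iff]
    omega
  have hA3 : A ≤ 3 := by
    have h4 := hfree 2 Nat.prime_two
    rw [padicValInt_dvd_iff] at h4
    omega
  -- key inequality
  have hmincast : x ^ 2 - (a:ℚ) = x ^ 2 + ((-a : ℤ):ℚ) := by push_cast; ring
  have hvalnegA : padicValRat 2 ((-a : ℤ):ℚ) = (A:ℤ) := by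
    rw [show ((-a : ℤ):ℚ) = -((a:ℤ):ℚ) by push_cast; ring, padicValRat.neg, hvalA]
  have hnegAne : ((-a : ℤ):ℚ) ≠ 0 := by push_cast; simpa using haQ
  have hminvm : 2 * e ≠ (A:ℤ) → vm = min (2 * e) (A:ℤ) := by
    intro hne2
    rw [hvm, hmincast, padicValRat.add_eq_min (by rw [← hmincast]; exact hsub)
      (pow_ne_zero 2 hx0) hnegAne (by rw [hvx2, hvalnegA]; exact hne2), hvx2, hvalnegA]
  have hminvp : 2 * e ≠ (A:ℤ) → vp = min (2 * e) (A:ℤ) := by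
    intro hne2
    rw [hvp, padicValRat.add_eq_min hxpa (pow_ne_zero 2 hx0) haQ
      (by rw [hvx2, hvalA]; exact hne2), hvx2, hvalA]
  have key : padicValRat 2 (xc ((2:ℕ) • Point.some _ _ h)) ≤ min 0 e - 2 := by
    rcases lt_trichotomy e 0 with hneg | hzero | hpos
    · -- e < 0 : both valuations are 2e
      have h1 := hminvm (by omega)
      have h2 := hminvp (by omega)
      rw [hvX2]
      omega
    · -- e = 0
      rcases lt_trichotomy (2 * e) ((A:ℤ)) with hlt | heq2 | hgt
      · have h1 := hminvm (by omega)
        have h2 := hminvp (by omega)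
        rw [hvX2]
        omega
      · -- 2e = A, e = 0, A = 0 : a odd
        have hA0 : A = 0 := by omega
        have haodd : ¬ (2:ℤ) ∣ a := by
          intro hdvd
          apply hAnotdvd
          rw [hA0]
          simpa using hdvd
        rcases (by omega : a % 4 = 1 ∨ a % 4 = 3) with h1 | h3
        · -- a % 4 = 1 : parity contradiction
          exfalso
          have : vp = 1 := by
            rw [hvp]
            exact unit_sq_add_one_mod_four' x hx0 hzero a h1 hxpa
          omega
        · -- a % 4 = 3
          have hvm1 : vm = 1 := by
            rw [hvm, hmincast]
            exact unit_sq_add_one_mod_four' x hx0 hzero (-a) (by omega)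
              (by rw [← hmincast]; exact hsub)
          have hvp2 : 2 ≤ vp := by
            rw [hvp]
            exact unit_sq_add_three_mod_four' x hx0 hzero a h3 hxpa
          rw [hvX2]
          omega
      · -- 2e > A, e = 0 → A < 0 impossible
        omega
    · -- e > 0
      rcases lt_trichotomy (2 * e) ((A:ℤ)) with hlt | heq2 | hgt
      · -- 2e < A ≤ 3 with e ≥ 1 : parity contradiction
        have h2 := hminvp (by omega)
        rw [hvX2]
        omega
      · -- 2e = A : then e = 1, A = 2
        have he1 : e = 1 := by omega
        have hA2 : A = 2 := by omega
        have h4dvd : (4:ℤ) ∣ a := by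
          have h5 := hAdvd; rw [hA2] at h5; exact_mod_cast h5
        have h8ndvd : ¬ (8:ℤ) ∣ a := by
          intro hdvd
          apply hAnotdvd
          rw [hA2]
          exact_mod_cast hdvd
        obtain ⟨a', ha4⟩ := h4dvd
        have ha'odd : a' % 2 = 1 := by omega
        set u := x / 2 with hu
        have hu0 : u ≠ 0 := div_ne_zero hx0 two_ne_zero
        have huval : padicValRat 2 u = 0 := by
          rw [hu, padicValRat.div hx0 two_ne_zero, val_two']
          omega
        have hcasta : (a:ℚ) = 4 * (a':ℚ) := by exact_mod_cast congrArg (fun z : ℤ => (z:ℚ)) ha4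
        have hm4 : x ^ 2 - (a:ℚ) = 4 * (u ^ 2 + ((-a' : ℤ):ℚ)) := by
          rw [hu, hcasta]; push_cast; ring
        have hp4 : x ^ 2 + (a:ℚ) = 4 * (u ^ 2 + ((a' : ℤ):ℚ)) := by
          rw [hu, hcasta]; push_cast; ring
        have hmne : u ^ 2 + ((-a' : ℤ):ℚ) ≠ 0 := by
          intro h0
          apply hsub
          rw [hm4, h0, mul_zero]
        have hpne : u ^ 2 + ((a' : ℤ):ℚ) ≠ 0 := by
          intro h0
          apply hxpa
          rw [hp4, h0, mul_zero]
        rcases (by omega : a' % 4 = 1 ∨ a' % 4 = 3) with h1 | h3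
        · -- excluded by hcase
          exfalso
          rcases hcase with hc | hc
          · exact hc (by omega)
          · exact hc (by rw [← he] at *; omega)
        · have hvm3 : vm = 3 := by
            rw [hvm, hm4, padicValRat.mul (by norm_num) hmne, val_four',
              unit_sq_add_one_mod_four' u hu0 huval (-a') (by omega) hmne]
            norm_num
          have hvp4 : 4 ≤ vp := by
            have h2 := unit_sq_add_three_mod_four' u hu0 huval a' h3 hpne
            rw [hvp, hp4, padicValRat.mul (by norm_num) hpne, val_four']
            omega
          rw [hvX2]
          omega
      · -- A < 2e : vm = vp = A
        have h1 := hminvm (by omega)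
        have h2 := hminvp (by omega)
        rw [hvX2]
        omega
  -- conclude
  have hd1 := den_val' x hx0
  have hd2 := den_val' _ hX2ne
  rw [← he] at hd1
  omega
end

section
/- For every real number c > 1, one has c³ − 3c² + 4c − 2 > 0 and (c⁴ − 8c² + 16c − 8) / (4·(c³ − 3c² + 4c − 2)) > c/4 + 0.455. -/
open Real

/-- For every real `c > 1`: `c³ − 3c² + 4c − 2 > 0` and
`(c⁴ − 8c² + 16c − 8)/(4·(c³ − 3c² + 4c − 2)) > c/4 + 0.455`; i.e. if `x(P') = c·√a` on
`E'_a`, then `x(2P') > (c/4 + 0.455)·√a`. -/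
theorem duplication_x_lower_bound (c : ℝ) (hc : 1 < c) :
    0 < c ^ 3 - 3 * c ^ 2 + 4 * c - 2 ∧
      (c ^ 4 - 8 * c ^ 2 + 16 * c - 8) / (4 * (c ^ 3 - 3 * c ^ 2 + 4 * c - 2))
        > c / 4 + 0.455 := by
  have h1 : 0 < c ^ 3 - 3 * c ^ 2 + 4 * c - 2 := by nlinarith [sq_nonneg (c - 1)]
  refine ⟨h1, ?_⟩
  rw [gt_iff_lt, lt_div_iff₀ (by linarith)]
  have ht : (0:ℝ) ≤ c - 1 := by linarith
  nlinarith [mul_nonneg ht (sq_nonneg (c - 1 - 1.468)), sq_nonneg (c - 1 - 1.4671)]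
end
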